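/- Let d ∈ ℕ*, let κ be an even positive integer, and let m ∈ ℕ. If E ∈ 𝚯_{m,κ}(d) and c = ε·cos(jπ/κ) for some sign ε ∈ {−1, +1} and some integer j with 0 ≤ j ≤ κ/2 − 1, then c·E ∈ 𝚯_{m,κ}(d+1). -/

import Mathlib

open Real

/-- Chebyshev polynomial of the second kind, as a real function. -/
noncomputable def chebU (n : ℕ) (x : ℝ) : ℝ := (Polynomial.Chebyshev.U ℝ n).eval x

/-- `g_{jκ}(x₁,…,x_d) = Σ_i (∏_{l≠i} x_l)(1-x_i²)U_{jκ-1}(x_i)` in dimension `d`. -/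
noncomputable def gD (d j κ : ℕ) (x : Fin d → ℝ) : ℝ :=
  ∑ i : Fin d, (∏ l ∈ Finset.univ.erase i, x l) * (1 - x i ^ 2) * chebU (j * κ - 1) (x i)

/-- The constant energy surface `S_E(d)`. -/
def SE (d : ℕ) (E : ℝ) (x : Fin d → ℝ) : Prop :=
  (∀ l, x l ∈ Set.Icc (-1 : ℝ) 1) ∧ (∏ l, x l) = E

/-- `E ∈ 𝚯_{m,κ}(d)`; for `m = 0` this says there is `x ∈ S_E(d)` with
`g_{jκ}(x) = 0` for all `j ≥ 1`. -/
def ThetaD (d m κ : ℕ) (E : ℝ) : Prop :=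
  ∃ X : ℕ → (Fin d → ℝ), ∃ ω : ℕ → ℝ,
    (∀ q ≤ m, SE d E (X q)) ∧
    (∀ q < m, ω q ≤ 0) ∧
    (∀ j : ℕ, 1 ≤ j → gD d j κ (X m) = ∑ q ∈ Finset.range m, ω q * gD d j κ (X q))

open Finset in
lemma prod_snoc_erase_last (d : ℕ) (x : Fin d → ℝ) (y : ℝ) :
    ∏ l ∈ univ.erase (Fin.last d), Fin.snoc x y l = ∏ i, x i := by
  rw [Fin.univ_castSuccEmb, Finset.erase_cons, Finset.prod_map]
  exact Finset.prod_congr rfl fun i _ => by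
    simp only [Fin.coe_castSuccEmb, Fin.snoc_castSucc]

open Finset in
lemma prod_snoc_erase_castSucc (d : ℕ) (x : Fin d → ℝ) (y : ℝ) (i : Fin d) :
    ∏ l ∈ univ.erase (i.castSucc), Fin.snoc x y l = y * ∏ l ∈ univ.erase i, x l := by
  rw [Fin.univ_castSuccEmb, Finset.erase_cons_of_ne _ (by simp [Fin.ext_iff]; omega),
    Finset.prod_cons, show i.castSucc = Fin.castSuccEmb i from rfl, ← Finset.map_erase,
    Finset.prod_map, Fin.snoc_last]
  congr 1
  exact Finset.prod_congr rfl fun l _ => by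
    simp only [Fin.coe_castSuccEmb, Fin.snoc_castSucc]

open Finset in
lemma gD_snoc (d j κ : ℕ) (x : Fin d → ℝ) (y : ℝ) :
    gD (d+1) j κ (Fin.snoc x y) =
      y * gD d j κ x + (∏ l, x l) * ((1 - y ^ 2) * chebU (j * κ - 1) y) := by
  unfold gD
  rw [Fin.sum_univ_castSucc]
  simp only [Fin.snoc_castSucc, Fin.snoc_last, prod_snoc_erase_last,
    prod_snoc_erase_castSucc]
  rw [Finset.mul_sum]
  congr 1
  · apply Finset.sum_congr rfl; intro i _; ring
  · ring

lemma cheb_zero_key (κ j n : ℕ) (hκ : 1 ≤ κ) (hn : 1 ≤ n) (ε : ℝ)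
    (hε : ε = 1 ∨ ε = -1) (c : ℝ) (hc : c = ε * Real.cos (j * π / κ)) :
    (1 - c ^ 2) * chebU (n * κ - 1) c = 0 := by
  have key : ∀ θ : ℝ, Real.sin ((n * κ : ℕ) * θ) = 0 →
      (1 - (Real.cos θ) ^ 2) * chebU (n * κ - 1) (Real.cos θ) = 0 := by
    intro θ h
    have h0 := Polynomial.Chebyshev.U_real_cos θ ((n * κ - 1 : ℕ) : ℤ)
    have h1 : ((((n * κ - 1 : ℕ) : ℤ) : ℝ) + 1) = ((n * κ : ℕ) : ℝ) := by
      have hnk : 1 ≤ n * κ := Nat.one_le_iff_ne_zero.mpr (by positivity)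
      push_cast [hnk]; ring
    rw [h1] at h0
    have h3 : chebU (n * κ - 1) (Real.cos θ) * Real.sin θ = Real.sin ((n*κ : ℕ) * θ) := by
      simpa [chebU] using h0
    have h2 : (1 : ℝ) - (Real.cos θ)^2 = Real.sin θ ^ 2 := by
      have := Real.sin_sq_add_cos_sq θ; nlinarith
    rw [h2]
    calc Real.sin θ ^ 2 * chebU (n*κ-1) (Real.cos θ)
        = Real.sin θ * (chebU (n*κ-1) (Real.cos θ) * Real.sin θ) := by ring
      _ = 0 := by rw [h3, h]; ring
  rcases hε with h | h
  · rw [hc, h, one_mul]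
    apply key
    have : ((n*κ:ℕ):ℝ) * ((j:ℝ) * π / κ) = (n*j : ℕ) * π := by
      push_cast
      field_simp
    rw [this, Real.sin_nat_mul_pi]
  · rw [hc, h, neg_one_mul, ← Real.cos_pi_sub]
    apply key
    have : ((n*κ:ℕ):ℝ) * (π - (j:ℝ) * π / κ) = (n*κ:ℕ) * π - (n*j:ℕ)*π := by
      push_cast; field_simp
    rw [this, Real.sin_sub, Real.sin_nat_mul_pi, Real.sin_nat_mul_pi]
    ring

/-- Thresholds in dimension `d` generate thresholds in dimension `d+1` by
scaling with `±cos(jπ/κ)`, `0 ≤ j ≤ κ/2 - 1`. -/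
theorem threshold_dimension_shift (d κ m : ℕ) (hd : 1 ≤ d) (hκ : 1 ≤ κ) (hke : Even κ)
    (E : ℝ) (hE : ThetaD d m κ E) (ε : ℝ) (hε : ε = 1 ∨ ε = -1)
    (j : ℕ) (hj : j ≤ κ / 2 - 1) (c : ℝ) (hc : c = ε * Real.cos (j * π / κ)) :
    ThetaD (d + 1) m κ (c * E) := by
  obtain ⟨X, ω, hSE, hω, hg⟩ := hE
  have hcbound : c ∈ Set.Icc (-1 : ℝ) 1 := by
    constructor <;> rcases hε with h | h <;> rw [hc, h] <;>
      [skip; skip; skip; skip] <;>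
      nlinarith [Real.neg_one_le_cos ((j:ℝ) * π / κ), Real.cos_le_one ((j:ℝ) * π / κ)]
  have hzero : ∀ n : ℕ, 1 ≤ n → (1 - c ^ 2) * chebU (n * κ - 1) c = 0 :=
    fun n hn => cheb_zero_key κ j n hκ hn ε hε c hc
  refine ⟨fun q => Fin.snoc (X q) c, ω, ?_, hω, ?_⟩
  · intro q hq
    obtain ⟨hb, hp⟩ := hSE q hq
    constructor
    · intro l
      induction l using Fin.lastCases with
      | last => simpa using hcbound
      | cast i => simpa using hb i
    · rw [Fin.prod_univ_castSucc]
      simp only [Fin.snoc_castSucc, Fin.snoc_last]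
      rw [hp]; ring
  · intro n hn
    have hsnoc : ∀ q, gD (d+1) n κ (Fin.snoc (X q) c) = c * gD d n κ (X q) := by
      intro q
      rw [gD_snoc, hzero n hn]
      ring
    rw [hsnoc m, hg n hn, Finset.mul_sum]
    apply Finset.sum_congr rfl
    intro q _
    rw [hsnoc q]
    ring
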